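/- Let n and i be integers with 1 ≤ i ≤ n−1, and let π be a permutation of length n which avoids both 1243 and 2143 and satisfies π(i+1) = n. Let σ₁ be the permutation of length i which is order-isomorphic to the sequence π(1), …, π(i), and let σ₂ be the permutation of length n−i formed by the entries of π with values in {1, …, n−i}, taken in their order of appearance in π. Then for every k ≥ 1, τ_k(π) = τ_k(σ₁) + τ_{k−1}(σ₁) + τ_k(σ₂). -/
import Mathlib



/-- `π` contains the pattern `σ`. -/
def PContains {k n : ℕ} (σ : Equiv.Perm (Fin k)) (π : Equiv.Perm (Fin n)) : Prop :=
  ∃ f : Fin k → Fin n, StrictMono f ∧ ∀ a b : Fin k, π (f a) < π (f b) ↔ σ a < σ b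

/-- `π` avoids the pattern `σ`. -/
def PAvoids {k n : ℕ} (σ : Equiv.Perm (Fin k)) (π : Equiv.Perm (Fin n)) : Prop :=
  ¬ PContains σ π

/-- The pattern 1243 (in one-line notation, 1-based). -/
def p1243 : Equiv.Perm (Fin 4) := ⟨![0, 1, 3, 2], ![0, 1, 3, 2], by decide, by decide⟩

/-- The pattern 2143 (in one-line notation, 1-based). -/
def p2143 : Equiv.Perm (Fin 4) := ⟨![1, 0, 3, 2], ![1, 0, 3, 2], by decide, by decide⟩

/-- `π` avoids both 1243 and 2143. -/
def AvoidsBoth {n : ℕ} (π : Equiv.Perm (Fin n)) : Prop :=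
  PAvoids p1243 π ∧ PAvoids p2143 π

/-- `τ_k(π)`: the number of increasing subsequences of length `k` in `π`
(with the convention `τ_0 = 0`). -/
noncomputable def tauPerm (k : ℕ) {n : ℕ} (π : Equiv.Perm (Fin n)) : ℕ :=
  if k = 0 then 0 else
    Nat.card {f : Fin k → Fin n // StrictMono f ∧ StrictMono (fun a => π (f a))}

/-- The number of occurrences (subsequences of type `σ`) of the pattern `σ` in `π`. -/
noncomputable def numOcc {k n : ℕ} (σ : Equiv.Perm (Fin k)) (π : Equiv.Perm (Fin n)) : ℕ :=
  Nat.card {f : Fin k → Fin n // StrictMono f ∧ ∀ a b : Fin k, π (f a) < π (f b) ↔ σ a < σ b}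

theorem tau_zero {m : ℕ} (ρ : Equiv.Perm (Fin m)) : tauPerm 0 ρ = 0 := if_pos rfl

theorem tau_eq {k : ℕ} (hk : k ≠ 0) {m : ℕ} (ρ : Equiv.Perm (Fin m)) :
    tauPerm k ρ = Nat.card {f : Fin k → Fin m // StrictMono f ∧ StrictMono (fun a => ρ (f a))} :=
  if_neg hk

theorem sm1 {β : Type*} [Preorder β] (f : Fin 1 → β) : StrictMono f := by
  intro a b h
  have he : a = b := Subsingleton.elim a b
  rw [he] at h
  exact absurd h (lt_irrefl b)

theorem tau_one {m : ℕ} (ρ : Equiv.Perm (Fin m)) : tauPerm 1 ρ = m := by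
  rw [tau_eq one_ne_zero]
  have e : {f : Fin 1 → Fin m // StrictMono f ∧ StrictMono (fun a => ρ (f a))} ≃ Fin m := by
    refine ⟨fun s => s.1 0, fun x => ⟨fun _ => x, sm1 _, sm1 _⟩, ?_, fun x => rfl⟩
    intro ⟨f, hf⟩
    apply Subtype.ext
    funext a
    exact congrArg f (Subsingleton.elim 0 a)
  rw [Nat.card_congr e, Nat.card_eq_fintype_card, Fintype.card_fin]

theorem nat_card_split {α : Type*} [Finite α] (P Q : α → Prop) :
    Nat.card {a // P a} = Nat.card {a // P a ∧ Q a} + Nat.card {a // P a ∧ ¬ Q a} := by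
  classical
  have e1 : {x : {a // P a} // Q x.1} ≃ {a // P a ∧ Q a} :=
    Equiv.subtypeSubtypeEquivSubtypeInter P Q
  have e2 : {x : {a // P a} // ¬ Q x.1} ≃ {a // P a ∧ ¬ Q a} :=
    Equiv.subtypeSubtypeEquivSubtypeInter P (fun a => ¬ Q a)
  have e3 : {x : {a // P a} // Q x.1} ⊕ {x : {a // P a} // ¬ Q x.1} ≃ {a // P a} :=
    Equiv.sumCompl _
  rw [← Nat.card_congr e3, Nat.card_sum, Nat.card_congr e1, Nat.card_congr e2]

theorem sm_le {k m : ℕ} {f : Fin k → Fin m} (hf : StrictMono f) (a : Fin k) : (a:ℕ) ≤ (f a : ℕ) := by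
  obtain ⟨v, hv⟩ := a
  induction v with
  | zero => exact Nat.zero_le _
  | succ b ih =>
    have hb : b < k := by omega
    have h1 : f ⟨b, hb⟩ < f ⟨b+1, hv⟩ := hf (Fin.mk_lt_mk.mpr (Nat.lt_succ_self b))
    have h2 := ih hb
    have h3 : (f ⟨b, hb⟩ : ℕ) < (f ⟨b+1, hv⟩ : ℕ) := h1
    simp only [Fin.val_mk] at h2 ⊢
    omega
theorem forb {n i : ℕ} (hi : i < n) (π : Equiv.Perm (Fin n)) (hav : AvoidsBoth π)
    (hπ : (π ⟨i,hi⟩ : ℕ) = n - 1)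
    (p1 p2 q : Fin n) (h12 : (p1:ℕ) < (p2:ℕ)) (h2i : (p2:ℕ) < i) (hiq : i < (q:ℕ))
    (hv1 : (π p1 : ℕ) < (π q : ℕ)) (hv2 : (π p2 : ℕ) < (π q : ℕ)) : False := by
  have hqmax : (π q : ℕ) < n - 1 := by
    have hub : (π q : ℕ) < n := (π q).isLt
    have hne : (π q : ℕ) ≠ n - 1 := by
      intro h
      have : π q = π ⟨i, hi⟩ := Fin.val_injective (h.trans hπ.symm)
      have : q = ⟨i, hi⟩ := π.injective this
      have : (q : ℕ) = i := congrArg Fin.val this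
      omega
    omega
  have hp1max : (π p1 : ℕ) < n - 1 := by omega
  have hp2max : (π p2 : ℕ) < n - 1 := by omega
  rcases Nat.lt_or_ge (π p1 : ℕ) (π p2 : ℕ) with hc | hc
  · -- 1243
    refine hav.1 ⟨fun a => if a.1 = 0 then p1 else if a.1 = 1 then p2 else if a.1 = 2 then ⟨i, hi⟩ else q, ?_, ?_⟩
    · rintro ⟨a, ha⟩ ⟨b, hb⟩ hab
      rw [Fin.mk_lt_mk] at hab
      rw [Fin.lt_def]
      interval_cases a <;> interval_cases b <;> simp <;> omega
    · rintro ⟨a, ha⟩ ⟨b, hb⟩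
      have e0 : ∀ h : 0 < 4, ((p1243 ⟨0, h⟩ : Fin 4) : ℕ) = 0 := fun _ => rfl
      have e1 : ∀ h : 1 < 4, ((p1243 ⟨1, h⟩ : Fin 4) : ℕ) = 1 := fun _ => rfl
      have e2 : ∀ h : 2 < 4, ((p1243 ⟨2, h⟩ : Fin 4) : ℕ) = 3 := fun _ => rfl
      have e3 : ∀ h : 3 < 4, ((p1243 ⟨3, h⟩ : Fin 4) : ℕ) = 2 := fun _ => rfl
      rw [Fin.lt_def, Fin.lt_def]
      interval_cases a <;> interval_cases b <;>
        simp only [e0, e1, e2, e3] <;> simp <;> omega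
  · -- 2143
    have hc' : (π p2 : ℕ) < (π p1 : ℕ) := by
      rcases Nat.lt_or_ge (π p2 : ℕ) (π p1 : ℕ) with h | h
      · exact h
      · have : π p1 = π p2 := Fin.val_injective (le_antisymm h hc)
        have : p1 = p2 := π.injective this
        have : (p1 : ℕ) = p2 := congrArg Fin.val this
        omega
    refine hav.2 ⟨fun a => if a.1 = 0 then p1 else if a.1 = 1 then p2 else if a.1 = 2 then ⟨i, hi⟩ else q, ?_, ?_⟩
    · rintro ⟨a, ha⟩ ⟨b, hb⟩ hab
      rw [Fin.mk_lt_mk] at hab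
      rw [Fin.lt_def]
      interval_cases a <;> interval_cases b <;> simp <;> omega
    · rintro ⟨a, ha⟩ ⟨b, hb⟩
      have e0 : ∀ h : 0 < 4, ((p2143 ⟨0, h⟩ : Fin 4) : ℕ) = 1 := fun _ => rfl
      have e1 : ∀ h : 1 < 4, ((p2143 ⟨1, h⟩ : Fin 4) : ℕ) = 0 := fun _ => rfl
      have e2 : ∀ h : 2 < 4, ((p2143 ⟨2, h⟩ : Fin 4) : ℕ) = 3 := fun _ => rfl
      have e3 : ∀ h : 3 < 4, ((p2143 ⟨3, h⟩ : Fin 4) : ℕ) = 2 := fun _ => rfl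
      rw [Fin.lt_def, Fin.lt_def]
      interval_cases a <;> interval_cases b <;>
        simp only [e0, e1, e2, e3] <;> simp <;> omega

-- card of value-preimage filter
theorem card_filter_pi_lt {n : ℕ} (π : Equiv.Perm (Fin n)) (c : Fin n) :
    (Finset.univ.filter (fun p : Fin n => π p < c)).card = (c : ℕ) := by
  have h : Finset.univ.filter (fun p : Fin n => π p < c)
      = (Finset.univ.filter (fun v : Fin n => v < c)).image π.symm := by
    ext p
    simp only [Finset.mem_filter, Finset.mem_univ, true_and, Finset.mem_image]
    constructor
    · intro hp; exact ⟨π p, hp, π.symm_apply_apply p⟩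
    · rintro ⟨v, hv, rfl⟩; simpa using hv
  rw [h, Finset.card_image_of_injective _ π.symm.injective]
  have h2 : Finset.univ.filter (fun v : Fin n => v < c) = Finset.Iio c := by ext x; simp
  rw [h2, Fin.card_Iio]

theorem small_right {n i : ℕ} (h1 : 1 ≤ i) (hi : i < n) (π : Equiv.Perm (Fin n))
    (hav : AvoidsBoth π)
    (hπ : (π ⟨i,hi⟩ : ℕ) = n - 1) (q : Fin n) (hq : i < (q:ℕ)) : (π q : ℕ) < n - i := by
  by_contra hcon
  push_neg at hcon
  have hqlt : (π q : ℕ) < n - 1 := by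
    have : (π q : ℕ) < n := (π q).isLt
    have hne : (π q : ℕ) ≠ n - 1 := by
      intro h
      have h2 : q = ⟨i, hi⟩ := π.injective (Fin.val_injective (h.trans hπ.symm))
      have := congrArg Fin.val h2
      simp at this; omega
    omega
  set P := Finset.univ.filter (fun p : Fin n => π p < π q) with hP
  have hcard : P.card = (π q : ℕ) := card_filter_pi_lt π (π q)
  set A := P.filter (fun p : Fin n => (p:ℕ) < i) with hA
  set B := P.filter (fun p : Fin n => i < (p:ℕ)) with hB
  have hPsub : P ⊆ A ∪ B := by
    intro p hp
    have hpP := hp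
    rw [hP, Finset.mem_filter] at hp
    have hpi : (p : ℕ) ≠ i := by
      intro h
      have h2 : p = ⟨i, hi⟩ := Fin.ext h
      have h3 := Fin.lt_def.mp hp.2
      rw [h2] at h3
      rw [hπ] at h3
      omega
    rcases Nat.lt_or_ge (p:ℕ) i with h | h
    · exact Finset.mem_union_left _ (Finset.mem_filter.mpr ⟨hpP, h⟩)
    · exact Finset.mem_union_right _ (Finset.mem_filter.mpr ⟨hpP, by omega⟩)
  have hAcard : A.card ≤ 1 := by
    rw [Finset.card_le_one]
    intro a ha b hb
    rw [hA, Finset.mem_filter, hP, Finset.mem_filter] at ha hb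
    by_contra hne
    rcases Nat.lt_or_ge (a:ℕ) (b:ℕ) with h | h
    · exact forb hi π hav hπ a b q h hb.2 hq (Fin.lt_def.mp ha.1.2) (Fin.lt_def.mp hb.1.2)
    · rcases Nat.lt_or_ge (b:ℕ) (a:ℕ) with h' | h'
      · exact forb hi π hav hπ b a q h' ha.2 hq (Fin.lt_def.mp hb.1.2) (Fin.lt_def.mp ha.1.2)
      · exact hne (Fin.ext (by omega))
  have hBcard : B.card + 1 ≤ n - 1 - i := by
    have hsub : B ⊆ (Finset.univ.filter (fun p : Fin n => i < (p:ℕ))).erase q := by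
      intro p hp
      rw [hB, Finset.mem_filter] at hp
      refine Finset.mem_erase.mpr ⟨?_, Finset.mem_filter.mpr ⟨Finset.mem_univ _, hp.2⟩⟩
      intro h
      have := hp.1
      rw [hP, Finset.mem_filter, h] at this
      exact absurd this.2 (lt_irrefl _)
    have h4 := Finset.card_le_card hsub
    have hqmem : q ∈ Finset.univ.filter (fun p : Fin n => i < (p:ℕ)) :=
      Finset.mem_filter.mpr ⟨Finset.mem_univ _, hq⟩
    rw [Finset.card_erase_of_mem hqmem] at h4
    have h5 : (Finset.univ.filter (fun p : Fin n => i < (p:ℕ))).card = n - 1 - i := by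
      have he : Finset.univ.filter (fun p : Fin n => i < (p:ℕ)) = Finset.Ioi ⟨i, hi⟩ := by
        ext x; simp [Fin.lt_def]
      rw [he, Fin.card_Ioi]
    have h6 : 1 ≤ (Finset.univ.filter (fun p : Fin n => i < (p:ℕ))).card :=
      Finset.card_pos.mpr ⟨q, hqmem⟩
    omega
  have h7 := Finset.card_union_le A B
  have h8 := Finset.card_le_card hPsub
  omega

theorem g_surj {n i : ℕ} (h1 : 1 ≤ i) (hi : i < n) (π : Equiv.Perm (Fin n))
    (g : Fin (n - i) → Fin n) (hg : StrictMono g)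
    (hgv : ∀ j : Fin (n - i), (π (g j) : ℕ) < n - i) :
    ∀ p : Fin n, (π p : ℕ) < n - i → ∃ j, g j = p := by
  have hSS : (Finset.univ.filter (fun p : Fin n => (π p : ℕ) < n - i)).card = n - i := by
    have he : Finset.univ.filter (fun p : Fin n => (π p : ℕ) < n - i)
        = Finset.univ.filter (fun p : Fin n => π p < (⟨n - i, by omega⟩ : Fin n)) := by
      ext x; simp [Fin.lt_def]
    rw [he, card_filter_pi_lt]
  have himg : Finset.univ.image g ⊆ Finset.univ.filter (fun p : Fin n => (π p : ℕ) < n - i) := by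
    intro p hp
    rw [Finset.mem_image] at hp
    obtain ⟨j, _, rfl⟩ := hp
    exact Finset.mem_filter.mpr ⟨Finset.mem_univ _, hgv j⟩
  have hcard : (Finset.univ.image g).card = n - i := by
    rw [Finset.card_image_of_injective _ hg.injective, Finset.card_univ, Fintype.card_fin]
  have heq := Finset.eq_of_subset_of_card_le himg (by omega)
  intro p hp
  have : p ∈ Finset.univ.image g := by
    rw [heq]; exact Finset.mem_filter.mpr ⟨Finset.mem_univ _, hp⟩
  rw [Finset.mem_image] at this
  obtain ⟨j, _, hj⟩ := this
  exact ⟨j, hj⟩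

theorem g_ne_i {n i : ℕ} (h1 : 1 ≤ i) (hi : i < n) (π : Equiv.Perm (Fin n))
    (hπ : (π ⟨i,hi⟩ : ℕ) = n - 1)
    (g : Fin (n - i) → Fin n)
    (hgv : ∀ j : Fin (n - i), (π (g j) : ℕ) < n - i) :
    ∀ j, (g j : ℕ) ≠ i := by
  intro j h
  have h2 : g j = ⟨i, hi⟩ := Fin.ext h
  have h3 := hgv j
  rw [h2, hπ] at h3
  omega

theorem g_pos {n i : ℕ} (h1 : 1 ≤ i) (hi : i < n) (π : Equiv.Perm (Fin n))
    (hav : AvoidsBoth π)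
    (hπ : (π ⟨i,hi⟩ : ℕ) = n - 1)
    (g : Fin (n - i) → Fin n) (hg : StrictMono g)
    (hgv : ∀ j : Fin (n - i), (π (g j) : ℕ) < n - i) :
    ((g ⟨0, by omega⟩ : Fin n) : ℕ) < i ∧ ∀ j : Fin (n - i), j.1 ≠ 0 → i < (g j : ℕ) := by
  have hni : 0 < n - i := by omega
  set z : Fin (n - i) := ⟨0, hni⟩ with hz
  set SS := Finset.univ.filter (fun p : Fin n => (π p : ℕ) < n - i) with hSSdef
  have hSS : SS.card = n - i := by
    have he : SS = Finset.univ.filter (fun p : Fin n => π p < (⟨n - i, by omega⟩ : Fin n)) := by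
      ext x; simp [hSSdef, Fin.lt_def]
    rw [he, card_filter_pi_lt]
  have hsplit := Finset.card_filter_add_card_filter_not
    (s := SS) (p := fun p : Fin n => (p : ℕ) < i)
  have hneg : SS.filter (fun p : Fin n => ¬ (p:ℕ) < i) = Finset.univ.filter (fun p : Fin n => i < (p:ℕ)) := by
    ext p
    simp only [Finset.mem_filter, Finset.mem_univ, true_and, hSSdef]
    constructor
    · rintro ⟨hsm, hge⟩
      rcases Nat.lt_or_ge i (p:ℕ) with h | h
      · exact h
      · exfalso
        have hpe : (p:ℕ) = i := by omega
        have h2 : p = ⟨i, hi⟩ := Fin.ext hpe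
        rw [h2, hπ] at hsm
        omega
    · intro h
      exact ⟨small_right h1 hi π hav hπ p h, by omega⟩
  have hIoi : (Finset.univ.filter (fun p : Fin n => i < (p:ℕ))).card = n - 1 - i := by
    have he : Finset.univ.filter (fun p : Fin n => i < (p:ℕ)) = Finset.Ioi ⟨i, hi⟩ := by
      ext x; simp [Fin.lt_def]
    rw [he, Fin.card_Ioi]
  have hone : (SS.filter (fun p : Fin n => (p:ℕ) < i)).card = 1 := by
    rw [hneg, hIoi] at hsplit; omega
  obtain ⟨p₀, hp₀⟩ := Finset.card_eq_one.mp hone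
  have hz_small : g z ∈ SS := Finset.mem_filter.mpr ⟨Finset.mem_univ _, hgv z⟩
  have hgz : (g z : ℕ) < i := by
    by_contra hcon
    push_neg at hcon
    have hzi : i < (g z : ℕ) := lt_of_le_of_ne hcon (fun h => g_ne_i h1 hi π hπ g hgv z h.symm)
    have hp₀mem : p₀ ∈ SS.filter (fun p : Fin n => (p:ℕ) < i) := by
      rw [hp₀]; exact Finset.mem_singleton_self _
    rw [Finset.mem_filter] at hp₀mem
    obtain ⟨j, hj⟩ := g_surj h1 hi π g hg hgv p₀ (Finset.mem_filter.mp hp₀mem.1).2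
    have hle : g z ≤ g j := hg.monotone (by rw [hz]; exact Fin.mk_le_of_le_val (Nat.zero_le _))
    rw [hj] at hle
    have h6 := Fin.le_def.mp hle
    have h7 := hp₀mem.2
    omega
  refine ⟨hgz, ?_⟩
  intro j hj
  have hjs : g j ∈ SS := Finset.mem_filter.mpr ⟨Finset.mem_univ _, hgv j⟩
  rcases Nat.lt_or_ge i (g j : ℕ) with h | h
  · exact h
  have hlt : (g j : ℕ) < i := lt_of_le_of_ne h (g_ne_i h1 hi π hπ g hgv j)
  exfalso
  have hgz_mem : g z ∈ SS.filter (fun p : Fin n => (p:ℕ) < i) := Finset.mem_filter.mpr ⟨hz_small, hgz⟩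
  have hgj_mem : g j ∈ SS.filter (fun p : Fin n => (p:ℕ) < i) := Finset.mem_filter.mpr ⟨hjs, hlt⟩
  rw [hp₀, Finset.mem_singleton] at hgz_mem hgj_mem
  have h8 : g z = g j := hgz_mem.trans hgj_mem.symm
  have h9 : z = j := hg.injective h8
  exact hj (by rw [← h9])



theorem equivB {n i k : ℕ} (h1 : 1 ≤ i) (hn : i < n) (hk : 1 ≤ k)
    (π : Equiv.Perm (Fin n)) (σ₁ : Equiv.Perm (Fin i))
    (hσ₁ : ∀ a b : Fin i, σ₁ a < σ₁ b ↔
      π ⟨a.1, by have := a.isLt; omega⟩ < π ⟨b.1, by have := b.isLt; omega⟩) :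
    Nat.card {f : Fin k → Fin n //
        (StrictMono f ∧ StrictMono (fun a => π (f a))) ∧ f ⟨k-1, by omega⟩ < (⟨i, hn⟩ : Fin n)}
      = Nat.card {h : Fin k → Fin i // StrictMono h ∧ StrictMono (fun a => σ₁ (h a))} := by
  apply Nat.card_congr
  refine ⟨?_, ?_, ?_, ?_⟩
  · rintro ⟨f, ⟨hsf, hsπ⟩, hlast⟩
    have hbd : ∀ a : Fin k, (f a : ℕ) < i := by
      intro a
      have hle : f a ≤ f ⟨k-1, by omega⟩ := hsf.monotone (by
        rw [Fin.le_def]; simp only [Fin.val_mk]; have := a.isLt; omega)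
      have e1 := Fin.le_def.mp hle
      have e2 := Fin.lt_def.mp hlast
      simp only [Fin.val_mk] at e2
      omega
    refine ⟨fun a => ⟨(f a).1, hbd a⟩, ?_, ?_⟩
    · intro a b hab
      exact Fin.mk_lt_mk.mpr (Fin.lt_def.mp (hsf hab))
    · intro a b hab
      exact (hσ₁ _ _).mpr (hsπ hab)
  · rintro ⟨h, hsh, hsσ⟩
    refine ⟨fun a => ⟨(h a).1, by have := (h a).isLt; omega⟩, ⟨?_, ?_⟩, ?_⟩
    · intro a b hab
      exact Fin.mk_lt_mk.mpr (Fin.lt_def.mp (hsh hab))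
    · intro a b hab
      exact (hσ₁ _ _).mp (hsσ hab)
    · exact Fin.mk_lt_mk.mpr (h _).isLt
  · rintro ⟨f, ⟨hsf, hsπ⟩, hlast⟩
    apply Subtype.ext
    funext a
    exact Fin.ext rfl
  · rintro ⟨h, hsh, hsσ⟩
    apply Subtype.ext
    funext a
    exact Fin.ext rfl

theorem pi_max {n i : ℕ} (hn : i < n) (π : Equiv.Perm (Fin n))
    (hπ : (π ⟨i, hn⟩ : ℕ) = n - 1) (x : Fin n) (hx : (x:ℕ) ≠ i) : (π x : ℕ) < n - 1 := by
  have h1 : (π x : ℕ) < n := (π x).isLt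
  have h2 : (π x : ℕ) ≠ n - 1 := by
    intro h
    have : x = ⟨i, hn⟩ := π.injective (Fin.val_injective (h.trans hπ.symm))
    exact hx (congrArg Fin.val this)
  omega

theorem equivA {n i k : ℕ} (h1 : 1 ≤ i) (hn : i < n) (hk : 2 ≤ k)
    (π : Equiv.Perm (Fin n)) (hπ : (π ⟨i, hn⟩ : ℕ) = n - 1)
    (σ₁ : Equiv.Perm (Fin i))
    (hσ₁ : ∀ a b : Fin i, σ₁ a < σ₁ b ↔
      π ⟨a.1, by have := a.isLt; omega⟩ < π ⟨b.1, by have := b.isLt; omega⟩) :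
    Nat.card {f : Fin k → Fin n //
        ((StrictMono f ∧ StrictMono (fun a => π (f a))) ∧
          ¬ f ⟨k-1, by omega⟩ < (⟨i, hn⟩ : Fin n)) ∧ f ⟨k-1, by omega⟩ = (⟨i, hn⟩ : Fin n)}
      = Nat.card {h : Fin (k-1) → Fin i // StrictMono h ∧ StrictMono (fun a => σ₁ (h a))} := by
  apply Nat.card_congr
  refine ⟨?_, ?_, ?_, ?_⟩
  · rintro ⟨f, ⟨⟨hsf, hsπ⟩, -⟩, heq⟩
    have hbd : ∀ a : Fin (k-1), (f ⟨a.1, by have := a.isLt; omega⟩ : ℕ) < i := by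
      intro a
      have hlt : f ⟨a.1, by have := a.isLt; omega⟩ < f ⟨k-1, by omega⟩ := hsf (by
        rw [Fin.lt_def]; simp only [Fin.val_mk]; exact a.isLt)
      rw [heq, Fin.lt_def] at hlt
      simpa using hlt
    refine ⟨fun a => ⟨(f ⟨a.1, by have := a.isLt; omega⟩).1, hbd a⟩, ?_, ?_⟩
    · intro a b hab
      refine Fin.mk_lt_mk.mpr (Fin.lt_def.mp (hsf ?_))
      rw [Fin.lt_def]; simp only [Fin.val_mk]; exact Fin.lt_def.mp hab
    · intro a b hab
      refine (hσ₁ _ _).mpr (hsπ ?_)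
      rw [Fin.lt_def]; simp only [Fin.val_mk]; exact Fin.lt_def.mp hab
  · rintro ⟨h, hsh, hsσ⟩
    refine ⟨fun a => if ha : a.1 < k-1 then
        (⟨(h ⟨a.1, ha⟩).1, by have := (h ⟨a.1, ha⟩).isLt; omega⟩ : Fin n) else ⟨i, hn⟩,
      ⟨⟨?_, ?_⟩, ?_⟩, ?_⟩
    · intro a b hab
      have hab' : a.1 < b.1 := Fin.lt_def.mp hab
      by_cases hb : b.1 < k - 1
      · have ha : a.1 < k - 1 := by omega
        simp only [dif_pos ha, dif_pos hb, Fin.lt_def, Fin.val_mk]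
        exact Fin.lt_def.mp (hsh (Fin.mk_lt_mk.mpr hab'))
      · have ha : a.1 < k - 1 := by have := b.isLt; omega
        simp only [dif_pos ha, dif_neg hb, Fin.lt_def, Fin.val_mk]
        exact (h ⟨a.1, ha⟩).isLt
    · intro a b hab
      have hab' : a.1 < b.1 := Fin.lt_def.mp hab
      by_cases hb : b.1 < k - 1
      · have ha : a.1 < k - 1 := by omega
        simp only [dif_pos ha, dif_pos hb]
        exact (hσ₁ _ _).mp (hsσ (Fin.mk_lt_mk.mpr hab'))
      · have ha : a.1 < k - 1 := by have := b.isLt; omega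
        simp only [dif_pos ha, dif_neg hb]
        rw [Fin.lt_def, hπ]
        exact pi_max hn π hπ _ (by simp only [Fin.val_mk]; omega)
    · simp only [Fin.val_mk, dif_neg (lt_irrefl (k-1))]
      exact lt_irrefl _
    · simp only [Fin.val_mk, dif_neg (lt_irrefl (k-1))]
  · rintro ⟨f, ⟨⟨hsf, hsπ⟩, hne⟩, heq⟩
    apply Subtype.ext
    funext a
    by_cases ha : a.1 < k - 1
    · simp only [Fin.val_mk, dif_pos ha]
    · simp only [Fin.val_mk, dif_neg ha]
      have ha' : a = ⟨k-1, by omega⟩ := Fin.ext (by have := a.isLt; simp only [Fin.val_mk]; omega)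
      rw [ha', heq]
  · rintro ⟨h, hsh, hsσ⟩
    apply Subtype.ext
    funext a
    apply Fin.ext
    simp only [Fin.val_mk, dif_pos a.isLt]

theorem equivC {n i k : ℕ} (h1 : 1 ≤ i) (hn : i < n) (hk : 2 ≤ k)
    (π : Equiv.Perm (Fin n)) (hav : AvoidsBoth π) (hπ : (π ⟨i, hn⟩ : ℕ) = n - 1)
    (σ₂ : Equiv.Perm (Fin (n - i)))
    (g : Fin (n - i) → Fin n) (hg : StrictMono g)
    (hgv : ∀ j : Fin (n - i), (π (g j) : ℕ) < n - i)
    (hσ₂ : ∀ j : Fin (n - i), (σ₂ j : ℕ) = (π (g j) : ℕ)) :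
    Nat.card {f : Fin k → Fin n //
        ((StrictMono f ∧ StrictMono (fun a => π (f a))) ∧
          ¬ f ⟨k-1, by omega⟩ < (⟨i, hn⟩ : Fin n)) ∧ ¬ f ⟨k-1, by omega⟩ = (⟨i, hn⟩ : Fin n)}
      = Nat.card {h : Fin k → Fin (n - i) // StrictMono h ∧ StrictMono (fun a => σ₂ (h a))} := by
  apply Nat.card_congr
  have hsmall : ∀ (f : Fin k → Fin n), StrictMono f → StrictMono (fun a => π (f a)) →
      ¬ f ⟨k-1, by omega⟩ < (⟨i, hn⟩ : Fin n) → ¬ f ⟨k-1, by omega⟩ = (⟨i, hn⟩ : Fin n) →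
      ∀ a : Fin k, (π (f a) : ℕ) < n - i := by
    intro f hsf hsπ hnlt hne a
    have hlast : i < (f ⟨k-1, by omega⟩ : ℕ) := by
      have h3 := Fin.lt_def.not.mp hnlt
      have h4 : (f ⟨k-1, by omega⟩ : ℕ) ≠ i := fun h => hne (Fin.ext h)
      simp only [Fin.val_mk] at h3
      omega
    have hle : π (f a) ≤ π (f ⟨k-1, by omega⟩) := by
      have := (hsπ.monotone (a := a) (b := ⟨k-1, by omega⟩) (by
        rw [Fin.le_def]; simp only [Fin.val_mk]; have := a.isLt; omega))
      exact this
    have := small_right h1 hn π hav hπ _ hlast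
    have := Fin.le_def.mp hle
    omega
  refine ⟨?_, ?_, ?_, ?_⟩
  · rintro ⟨f, ⟨⟨hsf, hsπ⟩, hnlt⟩, hne⟩
    refine ⟨fun a => (g_surj h1 hn π g hg hgv (f a) (hsmall f hsf hsπ hnlt hne a)).choose, ?_, ?_⟩
    · intro a b hab
      have sa := (g_surj h1 hn π g hg hgv (f a) (hsmall f hsf hsπ hnlt hne a)).choose_spec
      have sb := (g_surj h1 hn π g hg hgv (f b) (hsmall f hsf hsπ hnlt hne b)).choose_spec
      have h5 := hsf hab
      rw [← sa, ← sb] at h5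
      exact hg.lt_iff_lt.mp h5
    · intro a b hab
      have sa := (g_surj h1 hn π g hg hgv (f a) (hsmall f hsf hsπ hnlt hne a)).choose_spec
      have sb := (g_surj h1 hn π g hg hgv (f b) (hsmall f hsf hsπ hnlt hne b)).choose_spec
      rw [Fin.lt_def, hσ₂ _, hσ₂ _, sa, sb]
      exact Fin.lt_def.mp (hsπ hab)
  · rintro ⟨h, hsh, hsσ⟩
    refine ⟨fun a => g (h a), ⟨⟨hg.comp hsh, ?_⟩, ?_⟩, ?_⟩
    · intro a b hab
      rw [Fin.lt_def, ← hσ₂ _, ← hσ₂ _]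
      exact Fin.lt_def.mp (hsσ hab)
    · have hge : i < (g (h ⟨k-1, by omega⟩) : ℕ) := by
        refine (g_pos h1 hn π hav hπ g hg hgv).2 _ ?_
        have := sm_le hsh ⟨k-1, by omega⟩
        simp only [Fin.val_mk] at this
        omega
      rw [Fin.lt_def]
      simp only [Fin.val_mk]
      omega
    · have hge : i < (g (h ⟨k-1, by omega⟩) : ℕ) := by
        refine (g_pos h1 hn π hav hπ g hg hgv).2 _ ?_
        have := sm_le hsh ⟨k-1, by omega⟩
        simp only [Fin.val_mk] at this
        omega
      intro hcon
      have := congrArg Fin.val hcon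
      simp only [Fin.val_mk] at this
      omega
  · rintro ⟨f, ⟨⟨hsf, hsπ⟩, hnlt⟩, hne⟩
    apply Subtype.ext
    funext a
    dsimp only
    exact (g_surj h1 hn π g hg hgv (f a) (hsmall f hsf hsπ hnlt hne a)).choose_spec
  · rintro ⟨h, hsh, hsσ⟩
    apply Subtype.ext
    funext a
    apply hg.injective
    dsimp only
    exact (g_surj h1 hn π g hg hgv (g (h a)) (hgv (h a))).choose_spec

/-- Let 1 ≤ i ≤ n−1 and let π be a permutation of length n avoiding 1243
and 2143 with π(i+1) = n (one-line, 1-based).  Let σ₁ (of length i) be order-isomorphic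
to π(1), …, π(i), and let σ₂ (of length n−i) consist of the entries of π with values in
{1, …, n−i}, in order of appearance.  Then for every k ≥ 1,
τ_k(π) = τ_k(σ₁) + τ_{k−1}(σ₁) + τ_k(σ₂). -/
theorem stmt_3 (n i : ℕ) (h1 : 1 ≤ i) (h2 : i ≤ n - 1)
    (π : Equiv.Perm (Fin n)) (hav : AvoidsBoth π)
    (hπ : (π ⟨i, by omega⟩ : ℕ) = n - 1)
    (σ₁ : Equiv.Perm (Fin i))
    (hσ₁ : ∀ a b : Fin i, σ₁ a < σ₁ b ↔
      π ⟨a.1, by have := a.isLt; omega⟩ < π ⟨b.1, by have := b.isLt; omega⟩)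
    (σ₂ : Equiv.Perm (Fin (n - i)))
    (g : Fin (n - i) → Fin n) (hg : StrictMono g)
    (hgv : ∀ j : Fin (n - i), (π (g j) : ℕ) < n - i)
    (hσ₂ : ∀ j : Fin (n - i), (σ₂ j : ℕ) = (π (g j) : ℕ))
    (k : ℕ) (hk : 1 ≤ k) :
    tauPerm k π = tauPerm k σ₁ + tauPerm (k - 1) σ₁ + tauPerm k σ₂ := by
  have hn : i < n := by omega
  rcases (by omega : k = 1 ∨ 2 ≤ k) with rfl | hk2
  · rw [show (1:ℕ) - 1 = 0 from rfl, tau_zero, tau_one, tau_one, tau_one]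
    omega
  · have hkne : k ≠ 0 := by omega
    have hk1ne : k - 1 ≠ 0 := by omega
    have hπ' : (π ⟨i, hn⟩ : ℕ) = n - 1 := hπ
    rw [tau_eq hkne π, tau_eq hkne σ₁, tau_eq hk1ne σ₁, tau_eq hkne σ₂,
      nat_card_split (fun f : Fin k → Fin n => StrictMono f ∧ StrictMono (fun a => π (f a)))
        (fun f => f ⟨k-1, by omega⟩ < (⟨i, hn⟩ : Fin n)),
      nat_card_split (fun f : Fin k → Fin n =>
          (StrictMono f ∧ StrictMono (fun a => π (f a))) ∧ ¬ f ⟨k-1, by omega⟩ < (⟨i, hn⟩ : Fin n))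
        (fun f => f ⟨k-1, by omega⟩ = (⟨i, hn⟩ : Fin n)),
      equivB h1 hn (by omega) π σ₁ hσ₁,
      equivA h1 hn hk2 π hπ' σ₁ hσ₁,
      equivC h1 hn hk2 π hav hπ' σ₂ g hg hgv hσ₂]
    exact (Nat.add_assoc _ _ _).symm
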